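/- Let 1 < γ < 2 and B₀ ≠ 0. For ρ > B₀^{2/γ}, define f(ρ) = 2ρ^γ/(ρ^γ - B₀²). Then f(ρ) → 2⁺ as ρ → ∞, and consequently w(ρ, 0) = B₀² f(ρ)^{2/(2-γ)} - ∫_{f(ρ)}^4 (2B₀²/(2-γ)) · (1 - s/4)/(1 - s/2)² · s^{2/(2-γ)} ds → -∞ as ρ → ∞. -/

import Mathlib

open Filter Set intervalIntegral

private lemma aux_cont (C p : ℝ) :
    ∀ s ∈ Set.Ici (2:ℝ) \ {2},
      ContinuousAt (fun s : ℝ => C * ((1 - s / 4) / (1 - s / 2) ^ 2) * s ^ p) s := by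
  intro s hs
  obtain ⟨hs2, hsne⟩ := hs
  have hs0 : s ≠ 0 := by
    simp only [Set.mem_Ici] at hs2; intro h; rw [h] at hs2; norm_num at hs2
  have hden : (1 - s / 2) ^ 2 ≠ 0 := by
    simp only [Set.mem_singleton_iff] at hsne
    intro h
    have : 1 - s / 2 = 0 := pow_eq_zero_iff (n := 2) (by norm_num) |>.mp h
    apply hsne; linarith
  exact ((continuousAt_const.mul (((continuousAt_const.sub
      (continuousAt_id.div_const 4)).div ((continuousAt_const.sub
      (continuousAt_id.div_const 2)).pow 2) hden))).mul
      (Real.continuousAt_rpow_const s p (Or.inl hs0)))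

private lemma aux_int (C p : ℝ) (hC : 0 < C) (hp : 0 < p) :
    Tendsto (fun t : ℝ => ∫ s in t..4, C * ((1 - s / 4) / (1 - s / 2) ^ 2) * s ^ p)
      (nhdsWithin 2 (Set.Ioi 2)) atTop := by
  set g : ℝ → ℝ := fun s => C * ((1 - s / 4) / (1 - s / 2) ^ 2) * s ^ p with hgdef
  set c : ℝ := C * 2 ^ p with hcdef
  have hc : 0 < c := mul_pos hC (Real.rpow_pos_of_pos (by norm_num) p)
  have hcontOn : ∀ {a b : ℝ}, 2 < a → a ≤ b → IntervalIntegrable g MeasureTheory.volume a b := by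
    intro a b ha hab
    apply ContinuousOn.intervalIntegrable
    intro s hs
    rw [Set.uIcc_of_le hab] at hs
    exact (aux_cont C p s ⟨le_of_lt (lt_of_lt_of_le ha hs.1),
      by simp only [Set.mem_singleton_iff]; intro h; rw [h] at hs; linarith [hs.1]⟩).continuousWithinAt
  have key : ∀ t : ℝ, 2 < t → t < 3 → c * ((t - 2)⁻¹ - 1) ≤ ∫ s in t..4, g s := by
    intro t ht2 ht3
    have hI1 : IntervalIntegrable g MeasureTheory.volume t 3 := hcontOn ht2 (by linarith)
    have hI2 : IntervalIntegrable g MeasureTheory.volume 3 4 := hcontOn (by norm_num) (by norm_num)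
    have hIh : IntervalIntegrable (fun s : ℝ => c * ((s - 2) ^ 2)⁻¹)
        MeasureTheory.volume t 3 := by
      apply ContinuousOn.intervalIntegrable
      intro s hs
      rw [Set.uIcc_of_le (by linarith : t ≤ 3)] at hs
      have : (s - 2) ^ 2 ≠ 0 := pow_ne_zero 2 (by have := hs.1; intro h; apply absurd h; linarith)
      exact (continuousAt_const.mul
        (((continuousAt_id.sub continuousAt_const).pow 2).inv₀ this)).continuousWithinAt
    have hsplit : (∫ s in t..4, g s) = (∫ s in t..(3:ℝ), g s) + ∫ s in (3:ℝ)..4, g s :=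
      (integral_add_adjacent_intervals hI1 hI2).symm
    have h34 : 0 ≤ ∫ s in (3:ℝ)..4, g s := by
      apply integral_nonneg (by norm_num)
      intro s hs
      have h1 : (0:ℝ) ≤ 1 - s / 4 := by linarith [hs.2]
      have h2 : (0:ℝ) ≤ (1 - s / 2) ^ 2 := sq_nonneg _
      have h3 : (0:ℝ) ≤ s ^ p := Real.rpow_nonneg (by linarith [hs.1]) p
      exact mul_nonneg (mul_nonneg hC.le (div_nonneg h1 h2)) h3
    have hmono : (∫ s in t..(3:ℝ), c * ((s - 2) ^ 2)⁻¹) ≤ ∫ s in t..(3:ℝ), g s := by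
      apply integral_mono_on (by linarith) hIh hI1
      intro s hs
      obtain ⟨hs1, hs2⟩ := hs
      have hst : 2 < s := lt_of_lt_of_le ht2 hs1
      have hspos : (0:ℝ) < (s - 2) ^ 2 := pow_pos (by linarith) 2
      have h2p : (2:ℝ) ^ p ≤ s ^ p := Real.rpow_le_rpow (by norm_num) hst.le hp.le
      have hsp : (0:ℝ) ≤ s ^ p := Real.rpow_nonneg (by linarith) p
      have hgs : g s = C * (4 - s) * s ^ p / (s - 2) ^ 2 := by
        have hd : (1 - s / 2) ≠ 0 := by intro h; apply absurd h; intro h'; linarith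
        have hq : (1 - s / 4) / (1 - s / 2) ^ 2 = (4 - s) / (s - 2) ^ 2 := by
          rw [div_eq_div_iff (pow_ne_zero 2 hd) hspos.ne']
          ring
        simp only [hgdef, hq]
        ring
      rw [hgs, hcdef]
      rw [div_eq_mul_inv, mul_le_mul_iff_of_pos_right (inv_pos.mpr hspos)]
      have key2 : C * s ^ p ≤ C * (4 - s) * s ^ p := by
        nlinarith [mul_nonneg (mul_nonneg hC.le (by linarith : (0:ℝ) ≤ 3 - s)) hsp]
      calc C * 2 ^ p ≤ C * s ^ p := by
            exact mul_le_mul_of_nonneg_left h2p hC.le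
        _ ≤ C * (4 - s) * s ^ p := key2
    have hval : (∫ s in t..(3:ℝ), c * ((s - 2) ^ 2)⁻¹) = c * ((t - 2)⁻¹ - 1) := by
      rw [intervalIntegral.integral_const_mul]
      congr 1
      have heq : ∀ s : ℝ, ((s - 2) ^ 2)⁻¹ = (s - 2) ^ (-2 : ℤ) := fun s => by
        rw [zpow_neg, zpow_two, sq]
      simp_rw [heq]
      rw [intervalIntegral.integral_comp_sub_right (fun x : ℝ => x ^ (-2:ℤ)) 2]
      rw [integral_zpow (Or.inr ⟨by norm_num, by
        rw [Set.uIcc_of_le (by linarith : t - 2 ≤ 3 - 2)]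
        intro h; have := h.1; linarith⟩)]
      have ht2' : t - 2 ≠ 0 := by intro h; apply absurd h; intro h'; linarith
      norm_num
      ring
    calc c * ((t - 2)⁻¹ - 1) = ∫ s in t..(3:ℝ), c * ((s - 2) ^ 2)⁻¹ := hval.symm
      _ ≤ ∫ s in t..(3:ℝ), g s := hmono
      _ ≤ (∫ s in t..(3:ℝ), g s) + ∫ s in (3:ℝ)..4, g s := le_add_of_nonneg_right h34
      _ = ∫ s in t..4, g s := hsplit.symm
  have hlow : Tendsto (fun t : ℝ => c * ((t - 2)⁻¹ - 1)) (nhdsWithin 2 (Set.Ioi 2)) atTop := by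
    have h1 : Tendsto (fun t : ℝ => t - 2) (nhdsWithin 2 (Set.Ioi 2))
        (nhdsWithin 0 (Set.Ioi 0)) := by
      apply tendsto_nhdsWithin_of_tendsto_nhds_of_eventually_within
      · have hc : ContinuousAt (fun t : ℝ => t - 2) 2 :=
          continuousAt_id.sub continuousAt_const
        have h : Tendsto (fun t : ℝ => t - 2) (nhds 2) (nhds 0) := by
          simpa using hc.tendsto
        exact h.mono_left nhdsWithin_le_nhds
      · filter_upwards [self_mem_nhdsWithin] with t ht
        simp only [Set.mem_Ioi] at ht ⊢; linarith
    have h2 : Tendsto (fun t : ℝ => (t - 2)⁻¹) (nhdsWithin 2 (Set.Ioi 2)) atTop :=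
      tendsto_inv_nhdsGT_zero.comp h1
    have h3 : Tendsto (fun t : ℝ => (t - 2)⁻¹ - 1) (nhdsWithin 2 (Set.Ioi 2)) atTop :=
      tendsto_atTop_add_const_right _ _ h2
    exact Tendsto.const_mul_atTop hc h3
  apply tendsto_atTop_mono' _ _ hlow
  filter_upwards [Ioo_mem_nhdsGT_of_mem (⟨le_refl (2:ℝ), by norm_num⟩ : (2:ℝ) ∈ Set.Ico 2 3)] with t ht
  exact key t ht.1 ht.2

open Filter in
theorem stmt_16 (γ B₀ : ℝ) (hγ1 : 1 < γ) (hγ2 : γ < 2) (hB₀ : B₀ ≠ 0)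
    (f : ℝ → ℝ) (hf : ∀ ρ : ℝ, f ρ = 2 * ρ ^ γ / (ρ ^ γ - B₀ ^ 2)) :
    Tendsto f atTop (nhdsWithin 2 (Set.Ioi 2))
    ∧ Tendsto
        (fun ρ : ℝ => B₀ ^ 2 * f ρ ^ (2 / (2 - γ))
          - ∫ s in (f ρ)..4,
              (2 * B₀ ^ 2 / (2 - γ)) * ((1 - s / 4) / (1 - s / 2) ^ 2)
                * s ^ (2 / (2 - γ)))
        atTop atBot := by
  have hB2 : 0 < B₀ ^ 2 := pow_pos (abs_pos.mpr hB₀) 2 |>.trans_le (by rw [sq_abs])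
  have h2γ : 0 < 2 - γ := by linarith
  have hppos : 0 < 2 / (2 - γ) := by positivity
  have hCpos : 0 < 2 * B₀ ^ 2 / (2 - γ) := by positivity
  have hρtop : Tendsto (fun ρ : ℝ => ρ ^ γ) atTop atTop := tendsto_rpow_atTop (by linarith)
  have part1 : Tendsto f atTop (nhdsWithin 2 (Set.Ioi 2)) := by
    apply tendsto_nhdsWithin_of_tendsto_nhds_of_eventually_within
    · have hev : ∀ᶠ ρ : ℝ in atTop, 2 / (1 - B₀ ^ 2 / ρ ^ γ) = f ρ := by
        filter_upwards [hρtop.eventually_gt_atTop (B₀ ^ 2), hρtop.eventually_gt_atTop 0]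
          with ρ h1 h0
        rw [hf ρ]
        have hne : (0:ℝ) < 1 - B₀ ^ 2 / ρ ^ γ := by
          rw [sub_pos, div_lt_one h0]; exact h1
        rw [div_eq_div_iff hne.ne' (by intro h; apply absurd h; intro h'; linarith : ρ ^ γ - B₀ ^ 2 ≠ 0)]
        field_simp
      have hd : Tendsto (fun ρ : ℝ => 1 - B₀ ^ 2 / ρ ^ γ) atTop (nhds 1) := by
        have h0 : Tendsto (fun ρ : ℝ => B₀ ^ 2 / ρ ^ γ) atTop (nhds 0) :=
          Tendsto.div_atTop tendsto_const_nhds hρtop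
        simpa using tendsto_const_nhds.sub h0
      have hlim : Tendsto (fun ρ : ℝ => 2 / (1 - B₀ ^ 2 / ρ ^ γ)) atTop (nhds 2) := by
        have := (tendsto_const_nhds (x := (2:ℝ))).div hd one_ne_zero
        simpa [Pi.div_def] using this
      exact hlim.congr' hev
    · filter_upwards [hρtop.eventually_gt_atTop (B₀ ^ 2)] with ρ h1
      rw [Set.mem_Ioi, hf ρ, lt_div_iff₀ (by linarith)]
      linarith
  refine ⟨part1, ?_⟩
  have hInt : Tendsto (fun ρ : ℝ => ∫ s in (f ρ)..4,
      (2 * B₀ ^ 2 / (2 - γ)) * ((1 - s / 4) / (1 - s / 2) ^ 2) * s ^ (2 / (2 - γ)))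
      atTop atTop :=
    (aux_int (2 * B₀ ^ 2 / (2 - γ)) (2 / (2 - γ)) hCpos hppos).comp part1
  have hFirst : Tendsto (fun ρ : ℝ => B₀ ^ 2 * f ρ ^ (2 / (2 - γ))) atTop
      (nhds (B₀ ^ 2 * (2:ℝ) ^ (2 / (2 - γ)))) := by
    have hcont : ContinuousAt (fun x : ℝ => B₀ ^ 2 * x ^ (2 / (2 - γ))) 2 :=
      continuousAt_const.mul (Real.continuousAt_rpow_const 2 _ (Or.inl two_ne_zero))
    exact hcont.tendsto.comp (part1.mono_right nhdsWithin_le_nhds)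
  simp only [sub_eq_add_neg]
  exact hFirst.add_atBot (tendsto_neg_atTop_atBot.comp hInt)
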